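/- Ishikawa–Wakayama formula: for a skew-symmetric 2n × 2n matrix A and a 2k × 2n matrix B with k ≤ n, Pf(B A B^T) = Σ_{U ∈ C([2n], 2k)} det B[·, U] · Pf A[U], where the sum is over all 2k-element subsets U of [2n]. -/

import Mathlib

open Matrix

open Matrix

/-- The Pfaffian of an `n × n` matrix (intended for skew-symmetric matrices),
defined as the signed sum over perfect matchings of the index set: each matching
is encoded by the permutation listing its pairs `(a₁,b₁),(a₂,b₂),…` with
`aᵢ < bᵢ` and `a₁ < a₂ < ⋯`. For odd `n` the Pfaffian is `0`. -/
noncomputable def pfaffian {n : ℕ} {K : Type*} [Field K]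
    (A : Matrix (Fin n) (Fin n) K) : K :=
  if Even n then
    ∑ σ ∈ Finset.univ.filter (fun σ : Equiv.Perm (Fin n) =>
        (∀ i j : Fin n, (i : ℕ) % 2 = 0 → (j : ℕ) = (i : ℕ) + 1 → σ i < σ j) ∧
        (∀ i j : Fin n, (i : ℕ) % 2 = 0 → (j : ℕ) % 2 = 0 → i < j → σ i < σ j)),
      ((Equiv.Perm.sign σ : ℤ) : K) *
        ∏ i : Fin n,
          (if h : (i : ℕ) % 2 = 0 ∧ (i : ℕ) + 1 < n then
            A (σ i) (σ ⟨(i : ℕ) + 1, h.2⟩) else 1)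
  else 0

/-- The Pfaffian of the principal submatrix `A[U]`, read off in the order
induced by the linear order on the index type. -/
noncomputable def pfSub {ι K : Type*} [LinearOrder ι] [Field K]
    (A : Matrix ι ι K) (U : Finset ι) : K :=
  pfaffian (A.submatrix (fun i : Fin U.card => ((U.orderIsoOfFin rfl) i : ι))
    (fun j : Fin U.card => ((U.orderIsoOfFin rfl) j : ι)))

namespace IW

variable {k : ℕ}

section A

def dbl (i : Fin k) : Fin (2*k) := ⟨2*i.1, by omega⟩
def dbl1 (i : Fin k) : Fin (2*k) := ⟨2*i.1+1, by omega⟩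
def blk (j : Fin (2*k)) : Fin k := ⟨j.1/2, by omega⟩

@[simp] lemma blk_dbl (i : Fin k) : blk (dbl i) = i := by
  apply Fin.ext; simp only [blk, dbl]; omega
@[simp] lemma blk_dbl1 (i : Fin k) : blk (dbl1 i) = i := by
  apply Fin.ext; simp only [blk, dbl1]; omega
lemma dbl_blk {j : Fin (2*k)} (h : j.1 % 2 = 0) : dbl (blk j) = j := by
  apply Fin.ext; simp only [blk, dbl]; omega
lemma dbl1_blk {j : Fin (2*k)} (h : j.1 % 2 = 1) : dbl1 (blk j) = j := by
  apply Fin.ext; simp only [blk, dbl1]; omega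
lemma dbl_or_dbl1 (j : Fin (2*k)) : j = dbl (blk j) ∨ j = dbl1 (blk j) := by
  rcases Nat.mod_two_eq_zero_or_one j.1 with h | h
  · exact Or.inl (dbl_blk h).symm
  · exact Or.inr (dbl1_blk h).symm
@[simp] lemma dbl_mod (i : Fin k) : (dbl i).1 % 2 = 0 := by simp only [dbl]; omega
@[simp] lemma dbl1_mod (i : Fin k) : (dbl1 i).1 % 2 = 1 := by simp only [dbl1]; omega
lemma dbl_injective : Function.Injective (dbl (k := k)) := by
  intro a b h; rw [Fin.ext_iff] at h ⊢; simp only [dbl] at h; omega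
lemma dbl1_injective : Function.Injective (dbl1 (k := k)) := by
  intro a b h; rw [Fin.ext_iff] at h ⊢; simp only [dbl1] at h; omega
lemma dbl_lt_dbl1 (i : Fin k) : dbl i < dbl1 i := by
  simp only [Fin.lt_def, dbl, dbl1]; omega
lemma dbl_lt_dbl {i i' : Fin k} : dbl i < dbl i' ↔ i < i' := by
  simp only [Fin.lt_def, dbl]; omega
lemma dbl_ne_dbl1 (i i' : Fin k) : dbl i ≠ dbl1 i' := by
  intro h; rw [Fin.ext_iff] at h; simp only [dbl, dbl1] at h; omega

def pairFun (p : Fin k × Fin 2) : Fin (2*k) := ⟨2*p.1.1+p.2.1, by omega⟩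

lemma pairFun_inj : Function.Injective (pairFun (k := k)) := by
  rintro ⟨a, b⟩ ⟨c, d⟩ h
  simp only [pairFun, Fin.ext_iff] at h
  have hb := b.2; have hd := d.2
  have : a.1 = c.1 ∧ b.1 = d.1 := by omega
  simp [Prod.ext_iff, Fin.ext_iff, this.1, this.2]

noncomputable def pairEquiv : Fin k × Fin 2 ≃ Fin (2*k) :=
  Equiv.ofBijective pairFun ((Fintype.bijective_iff_injective_and_card pairFun).mpr
    ⟨pairFun_inj, by simp [mul_comm]⟩)

@[simp] lemma pairEquiv_apply (p : Fin k × Fin 2) : pairEquiv p = pairFun p :=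
  Equiv.ofBijective_apply _ _ p

lemma pairProd {M : Type*} [CommMonoid M] (f : Fin (2*k) → M) :
    ∏ j, f j = ∏ i : Fin k, (f (dbl i) * f (dbl1 i)) := by
  rw [← Equiv.prod_comp pairEquiv f, Fintype.prod_prod_type]
  refine Finset.prod_congr rfl fun i _ => ?_
  rw [Fin.prod_univ_two]
  have h0 : pairEquiv (i, 0) = dbl i := by
    simp [pairEquiv, Equiv.ofBijective, pairFun, dbl, Fin.ext_iff]
  have h1 : pairEquiv (i, 1) = dbl1 i := by
    simp [pairEquiv, Equiv.ofBijective, pairFun, dbl1, Fin.ext_iff]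
  rw [h0, h1]

/-- flip within blocks -/
def bflip : Equiv.Perm (Fin (2*k)) :=
  Function.Involutive.toPerm
    (fun j => ⟨if j.1 % 2 = 0 then j.1 + 1 else j.1 - 1, by split <;> omega⟩)
    (by intro j; apply Fin.ext; simp only; split <;> split <;> omega)

@[simp] lemma bflip_dbl (i : Fin k) : bflip (dbl i) = dbl1 i := by
  apply Fin.ext
  simp only [bflip, Function.Involutive.toPerm, Equiv.coe_fn_mk, dbl, dbl1]
  split <;> omega
@[simp] lemma bflip_dbl1 (i : Fin k) : bflip (dbl1 i) = dbl i := by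
  apply Fin.ext
  simp only [bflip, Function.Involutive.toPerm, Equiv.coe_fn_mk, dbl, dbl1]
  split <;> omega
lemma bflip_ne (j : Fin (2*k)) : bflip j ≠ j := by
  intro h; rw [Fin.ext_iff] at h
  simp only [bflip, Function.Involutive.toPerm, Equiv.coe_fn_mk] at h
  split at h <;> omega
@[simp] lemma bflip_bflip (j : Fin (2*k)) : bflip (bflip j) = j := by
  rcases dbl_or_dbl1 j with h | h <;> rw [h] <;> simp
@[simp] lemma blk_bflip (j : Fin (2*k)) : blk (bflip j) = blk j := by
  rcases dbl_or_dbl1 j with h | h <;> rw [h] <;> simp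


end A

lemma blk_eq_cases {j j' : Fin (2*k)} (h : blk j = blk j') : j = j' ∨ j = bflip j' := by
  have hv : j.1 / 2 = j'.1 / 2 := congrArg Fin.val h
  rcases dbl_or_dbl1 j with h1 | h1 <;> rcases dbl_or_dbl1 j' with h2 | h2
  · left; rw [h1, h2, h]
  · right; rw [h1, h2, bflip_dbl1, h]
  · right; rw [h1, h2, bflip_dbl, h]
  · left; rw [h1, h2, h]


def MS (k : ℕ) : Finset (Equiv.Perm (Fin (2*k))) :=
  Finset.univ.filter (fun σ : Equiv.Perm (Fin (2*k)) =>
    (∀ i j : Fin (2*k), (i : ℕ) % 2 = 0 → (j : ℕ) = (i : ℕ) + 1 → σ i < σ j) ∧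
    (∀ i j : Fin (2*k), (i : ℕ) % 2 = 0 → (j : ℕ) % 2 = 0 → i < j → σ i < σ j))

lemma mem_MS {σ : Equiv.Perm (Fin (2*k))} :
    σ ∈ MS k ↔ (∀ i : Fin k, σ (dbl i) < σ (dbl1 i)) ∧
      (∀ i i' : Fin k, i < i' → σ (dbl i) < σ (dbl i')) := by
  simp only [MS, Finset.mem_filter, Finset.mem_univ, true_and]
  constructor
  · rintro ⟨h1, h2⟩
    refine ⟨fun i => h1 _ _ (dbl_mod i) (by simp [dbl, dbl1]), fun i i' hii => ?_⟩
    exact h2 _ _ (dbl_mod i) (dbl_mod i') (dbl_lt_dbl.mpr hii)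
  · rintro ⟨h1, h2⟩
    constructor
    · intro i j hi hj
      have hj' : j = dbl1 (blk i) := by
        apply Fin.ext; simp only [dbl1, blk]; omega
      have hi' : i = dbl (blk i) := (dbl_blk hi).symm
      rw [hj', hi'] at *
      simpa using h1 (blk i)
    · intro i j hi hj hij
      have := h2 (blk i) (blk j) (by rw [← dbl_lt_dbl, dbl_blk hi, dbl_blk hj]; exact hij)
      rwa [dbl_blk hi, dbl_blk hj] at this

section Field

variable {K : Type*} [Field K]

/-- weight of a permutation -/
def wt (C : Matrix (Fin (2*k)) (Fin (2*k)) K) (σ : Equiv.Perm (Fin (2*k))) : K :=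
  ∏ i : Fin k, C (σ (dbl i)) (σ (dbl1 i))

def Fw (C : Matrix (Fin (2*k)) (Fin (2*k)) K) (σ : Equiv.Perm (Fin (2*k))) : K :=
  ((Equiv.Perm.sign σ : ℤ) : K) * wt C σ

lemma pf_eq (C : Matrix (Fin (2*k)) (Fin (2*k)) K) :
    pfaffian C = ∑ σ ∈ MS k, Fw C σ := by
  rw [pfaffian, if_pos (even_two_mul k)]
  refine Finset.sum_congr rfl fun σ _ => ?_
  unfold Fw wt
  congr 1
  rw [pairProd (f := fun j : Fin (2*k) =>
    if h : (j : ℕ) % 2 = 0 ∧ (j : ℕ) + 1 < 2*k then C (σ j) (σ ⟨(j : ℕ) + 1, h.2⟩) else 1)]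
  refine Finset.prod_congr rfl fun i _ => ?_
  rw [dif_pos ⟨dbl_mod i, by simp only [dbl]; omega⟩, dif_neg (by simp), mul_one]
  rfl

section Sign

def dPerm (π : Equiv.Perm (Fin k)) : Equiv.Perm (Fin (2*k)) where
  toFun j := if j.1 % 2 = 0 then dbl (π (blk j)) else dbl1 (π (blk j))
  invFun j := if j.1 % 2 = 0 then dbl (π⁻¹ (blk j)) else dbl1 (π⁻¹ (blk j))
  left_inv := by
    intro j
    rcases Nat.mod_two_eq_zero_or_one j.1 with h | h
    · simp [h, dbl_blk h]
    · simp [h, dbl1_blk h]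
  right_inv := by
    intro j
    rcases Nat.mod_two_eq_zero_or_one j.1 with h | h
    · simp [h, dbl_blk h]
    · simp [h, dbl1_blk h]

@[simp] lemma dPerm_dbl (π : Equiv.Perm (Fin k)) (i : Fin k) :
    dPerm π (dbl i) = dbl (π i) := by
  simp [dPerm, Equiv.coe_fn_mk]

@[simp] lemma dPerm_dbl1 (π : Equiv.Perm (Fin k)) (i : Fin k) :
    dPerm π (dbl1 i) = dbl1 (π i) := by
  simp [dPerm, Equiv.coe_fn_mk]

lemma dPerm_mul (π ρ : Equiv.Perm (Fin k)) : dPerm (π * ρ) = dPerm π * dPerm ρ := by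
  ext j : 1
  rcases dbl_or_dbl1 j with h | h <;> rw [h] <;>
    simp [Equiv.Perm.mul_apply]

lemma dPerm_one : dPerm (1 : Equiv.Perm (Fin k)) = 1 := by
  ext j : 1
  rcases dbl_or_dbl1 j with h | h <;> rw [h] <;> simp

lemma dPerm_swap (a b : Fin k) :
    dPerm (Equiv.swap a b) =
      Equiv.swap (dbl a) (dbl b) * Equiv.swap (dbl1 a) (dbl1 b) := by
  ext j : 1
  rcases dbl_or_dbl1 j with h | h <;> rw [h, Equiv.Perm.mul_apply]
  · rw [dPerm_dbl]
    have hinner : Equiv.swap (dbl1 a) (dbl1 b) (dbl (blk j)) = dbl (blk j) :=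
      Equiv.swap_apply_of_ne_of_ne (dbl_ne_dbl1 _ _) (dbl_ne_dbl1 _ _)
    rw [hinner]
    rcases eq_or_ne (blk j) a with rfl | ha
    · rw [Equiv.swap_apply_left, Equiv.swap_apply_left]
    rcases eq_or_ne (blk j) b with rfl | hb
    · rw [Equiv.swap_apply_right, Equiv.swap_apply_right]
    · rw [Equiv.swap_apply_of_ne_of_ne ha hb,
        Equiv.swap_apply_of_ne_of_ne (fun hh => ha (dbl_injective hh))
          (fun hh => hb (dbl_injective hh))]
  · rw [dPerm_dbl1]
    rcases eq_or_ne (blk j) a with rfl | ha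
    · have hinner : Equiv.swap (dbl1 (blk j)) (dbl1 b) (dbl1 (blk j)) = dbl1 b :=
        Equiv.swap_apply_left _ _
      rw [hinner, Equiv.swap_apply_left,
        Equiv.swap_apply_of_ne_of_ne (Ne.symm (dbl_ne_dbl1 _ _)) (Ne.symm (dbl_ne_dbl1 _ _))]
    rcases eq_or_ne (blk j) b with rfl | hb
    · have hinner : Equiv.swap (dbl1 a) (dbl1 (blk j)) (dbl1 (blk j)) = dbl1 a :=
        Equiv.swap_apply_right _ _
      rw [hinner, Equiv.swap_apply_right,
        Equiv.swap_apply_of_ne_of_ne (Ne.symm (dbl_ne_dbl1 _ _)) (Ne.symm (dbl_ne_dbl1 _ _))]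
    · have hinner : Equiv.swap (dbl1 a) (dbl1 b) (dbl1 (blk j)) = dbl1 (blk j) :=
        Equiv.swap_apply_of_ne_of_ne (fun hh => ha (dbl1_injective hh))
          (fun hh => hb (dbl1_injective hh))
      rw [hinner,
        Equiv.swap_apply_of_ne_of_ne (Ne.symm (dbl_ne_dbl1 _ _)) (Ne.symm (dbl_ne_dbl1 _ _)),
        Equiv.swap_apply_of_ne_of_ne ha hb]

lemma sign_dPerm (π : Equiv.Perm (Fin k)) : Equiv.Perm.sign (dPerm π) = 1 := by
  refine Equiv.Perm.swap_induction_on π ?_ ?_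
  · rw [dPerm_one, _root_.map_one]
  · intro p x y hxy ih
    rw [dPerm_mul, _root_.map_mul, ih, mul_one, dPerm_swap x y, _root_.map_mul,
      Equiv.Perm.sign_swap (fun hh => hxy (dbl_injective hh)),
      Equiv.Perm.sign_swap (fun hh => hxy (dbl1_injective hh))]
    simp

def ePerm (s : Finset (Fin k)) : Equiv.Perm (Fin (2*k)) :=
  Function.Involutive.toPerm (fun j => if blk j ∈ s then bflip j else j)
    (by
      intro j
      by_cases h : blk j ∈ s <;> simp [h])

lemma ePerm_apply (s : Finset (Fin k)) (j : Fin (2*k)) :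
    ePerm s j = if blk j ∈ s then bflip j else j := rfl

lemma ePerm_empty : ePerm (∅ : Finset (Fin k)) = 1 := by
  ext j : 1
  simp [ePerm_apply]

lemma ePerm_insert (a : Fin k) (s : Finset (Fin k)) (ha : a ∉ s) :
    ePerm (insert a s) = Equiv.swap (dbl a) (dbl1 a) * ePerm s := by
  ext j : 1
  rw [Equiv.Perm.mul_apply, ePerm_apply, ePerm_apply]
  rcases eq_or_ne (blk j) a with hj | hj
  · rw [if_pos (by simp [hj]), if_neg (by rw [hj]; exact ha)]
    rcases dbl_or_dbl1 j with h | h <;> rw [h, hj]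
    · rw [bflip_dbl, Equiv.swap_apply_left]
    · rw [bflip_dbl1, Equiv.swap_apply_right]
  · have hne1 : ∀ x : Fin (2*k), blk x ≠ a → Equiv.swap (dbl a) (dbl1 a) x = x := by
      intro x hx
      refine Equiv.swap_apply_of_ne_of_ne (fun hh => hx ?_) (fun hh => hx ?_)
      · rw [hh, blk_dbl]
      · rw [hh, blk_dbl1]
    by_cases hs : blk j ∈ s
    · rw [if_pos (by simp [hs]), if_pos hs, hne1 _ (by rwa [blk_bflip])]
    · rw [if_neg (by simp [hj, hs]), if_neg hs, hne1 _ hj]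

lemma sign_ePerm (s : Finset (Fin k)) : Equiv.Perm.sign (ePerm s) = (-1) ^ s.card := by
  classical
  induction s using Finset.induction with
  | empty => simp [ePerm_empty]
  | @insert a s ha ih =>
    rw [ePerm_insert a s ha, _root_.map_mul, ih,
      Equiv.Perm.sign_swap (dbl_ne_dbl1 a a), Finset.card_insert_of_notMem ha, pow_succ]
    exact (mul_comm _ _)

def Pc (τ : Equiv.Perm (Fin (2*k))) : Equiv.Perm (Fin (2*k)) := τ * bflip * τ⁻¹

lemma Pc_apply (τ : Equiv.Perm (Fin (2*k))) (x : Fin (2*k)) :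
    Pc τ x = τ (bflip (τ⁻¹ x)) := rfl

lemma Pc_apply_apply (τ : Equiv.Perm (Fin (2*k))) (j : Fin (2*k)) :
    Pc τ (τ j) = τ (bflip j) := by
  rw [Pc_apply, Equiv.Perm.coe_inv, Equiv.symm_apply_apply]

lemma Pc_invol (τ : Equiv.Perm (Fin (2*k))) (x : Fin (2*k)) : Pc τ (Pc τ x) = x := by
  simp [Pc_apply]

lemma Pc_ne (τ : Equiv.Perm (Fin (2*k))) (x : Fin (2*k)) : Pc τ x ≠ x := by
  intro hh
  rw [Pc_apply] at hh
  have h2 : bflip (τ⁻¹ x) = τ⁻¹ x :=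
    τ.injective (by rw [hh, Equiv.Perm.coe_inv, Equiv.apply_symm_apply])
  exact bflip_ne _ h2

lemma Pc_mul (g τ : Equiv.Perm (Fin (2*k))) : Pc (g * τ) = g * Pc τ * g⁻¹ := by
  simp only [Pc, _root_.mul_inv_rev]
  group

lemma Pc_inj (τ : Equiv.Perm (Fin (2*k))) : Function.Injective (Pc τ) :=
  (Pc τ).injective


section Decomp

def piFun (h : Equiv.Perm (Fin (2*k))) : Fin k → Fin k := fun i => blk (h (dbl i))

lemma piFun_inj (h : Equiv.Perm (Fin (2*k)))
    (hcomm : ∀ j, h (bflip j) = bflip (h j)) : Function.Injective (piFun h) := by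
  intro i i' hii
  rcases blk_eq_cases hii with h1 | h1
  · exact dbl_injective (h.injective h1)
  · rw [← hcomm (dbl i')] at h1
    have := h.injective h1
    rw [bflip_dbl] at this
    exact absurd this (dbl_ne_dbl1 _ _)

noncomputable def piPerm (h : Equiv.Perm (Fin (2*k)))
    (hcomm : ∀ j, h (bflip j) = bflip (h j)) : Equiv.Perm (Fin k) :=
  Equiv.ofBijective (piFun h) (Finite.injective_iff_bijective.mp (piFun_inj h hcomm))

lemma piPerm_apply (h : Equiv.Perm (Fin (2*k)))
    (hcomm : ∀ j, h (bflip j) = bflip (h j)) (i : Fin k) :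
    piPerm h hcomm i = blk (h (dbl i)) := rfl

def epsSet (h : Equiv.Perm (Fin (2*k))) : Finset (Fin k) :=
  Finset.univ.filter (fun i => (h (dbl i)).1 % 2 = 1)

lemma h_dbl_eq (h : Equiv.Perm (Fin (2*k)))
    (hcomm : ∀ j, h (bflip j) = bflip (h j)) (i : Fin k) :
    h (dbl i) = if i ∈ epsSet h then dbl1 (piPerm h hcomm i) else dbl (piPerm h hcomm i) := by
  rw [piPerm_apply, epsSet]
  by_cases hi : (h (dbl i)).1 % 2 = 1
  · rw [if_pos (by simp [hi]), dbl1_blk hi]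
  · have hz : (h (dbl i)).1 % 2 = 0 := by omega
    rw [if_neg (by simp [hi]), dbl_blk hz]

lemma h_dbl1_eq (h : Equiv.Perm (Fin (2*k)))
    (hcomm : ∀ j, h (bflip j) = bflip (h j)) (i : Fin k) :
    h (dbl1 i) = if i ∈ epsSet h then dbl (piPerm h hcomm i) else dbl1 (piPerm h hcomm i) := by
  have hx : h (dbl1 i) = bflip (h (dbl i)) := by rw [← bflip_dbl, hcomm]
  rw [hx, h_dbl_eq h hcomm]
  by_cases hi : i ∈ epsSet h <;> simp [hi]

lemma h_decomp (h : Equiv.Perm (Fin (2*k)))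
    (hcomm : ∀ j, h (bflip j) = bflip (h j)) :
    h = dPerm (piPerm h hcomm) * ePerm (epsSet h) := by
  ext j : 1
  rw [Equiv.Perm.mul_apply, ePerm_apply]
  rcases dbl_or_dbl1 j with hj | hj <;> rw [hj]
  · rw [blk_dbl, h_dbl_eq h hcomm]
    by_cases hi : blk j ∈ epsSet h <;> simp [hi]
  · rw [blk_dbl1, h_dbl1_eq h hcomm]
    by_cases hi : blk j ∈ epsSet h <;> simp [hi]

lemma sign_h (h : Equiv.Perm (Fin (2*k)))
    (hcomm : ∀ j, h (bflip j) = bflip (h j)) :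
    Equiv.Perm.sign h = (-1) ^ (epsSet h).card := by
  conv_lhs => rw [h_decomp h hcomm]
  rw [_root_.map_mul, sign_dPerm, sign_ePerm, one_mul]

end Decomp

end Sign

section Norm

def lowSet (τ : Equiv.Perm (Fin (2*k))) : Finset (Fin (2*k)) :=
  Finset.univ.filter (fun x => x < Pc τ x)

lemma card_lowSet (τ : Equiv.Perm (Fin (2*k))) : (lowSet τ).card = k := by
  classical
  have hcards : (lowSet τ).card = (Finset.univ.filter (fun x => Pc τ x < x)).card := by
    refine Finset.card_bij (fun a _ => Pc τ a) ?_ ?_ ?_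
    · intro a ha
      rw [lowSet, Finset.mem_filter] at ha
      exact Finset.mem_filter.mpr ⟨Finset.mem_univ _, by rw [Pc_invol]; exact ha.2⟩
    · intro a _ b _ hab
      exact Pc_inj τ hab
    · intro b hb
      rw [Finset.mem_filter] at hb
      exact ⟨Pc τ b, Finset.mem_filter.mpr
        ⟨Finset.mem_univ _, by rw [Pc_invol]; exact hb.2⟩, Pc_invol τ b⟩
  have h1 : (Finset.univ.filter (fun x => Pc τ x < x)) =
      (Finset.univ.filter (fun x => ¬ x < Pc τ x)) := by
    refine Finset.filter_congr (fun x _ => ?_)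
    simp only [not_lt]
    constructor
    · exact le_of_lt
    · intro hle
      exact lt_of_le_of_ne hle (Pc_ne τ x)
  have hsplit : (lowSet τ).card +
      (Finset.univ.filter (fun x => ¬ x < Pc τ x)).card = 2*k := by
    rw [lowSet, Finset.card_filter_add_card_filter_not]
    simp
  rw [h1] at hcards
  omega

def ordL (τ : Equiv.Perm (Fin (2*k))) : Fin k → Fin (2*k) :=
  fun i => (lowSet τ).orderEmbOfFin (card_lowSet τ) i

lemma ordL_mem (τ : Equiv.Perm (Fin (2*k))) (i : Fin k) : ordL τ i ∈ lowSet τ :=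
  Finset.orderEmbOfFin_mem _ _ _

lemma ordL_lt (τ : Equiv.Perm (Fin (2*k))) (i : Fin k) : ordL τ i < Pc τ (ordL τ i) := by
  have := ordL_mem τ i
  rw [lowSet, Finset.mem_filter] at this
  exact this.2

lemma ordL_strictMono (τ : Equiv.Perm (Fin (2*k))) : StrictMono (ordL τ) :=
  ((lowSet τ).orderEmbOfFin (card_lowSet τ)).strictMono

def normFun (τ : Equiv.Perm (Fin (2*k))) : Fin (2*k) → Fin (2*k) :=
  fun j => if j.1 % 2 = 0 then ordL τ (blk j) else Pc τ (ordL τ (blk j))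

lemma normFun_inj (τ : Equiv.Perm (Fin (2*k))) : Function.Injective (normFun τ) := by
  intro j j' hjj
  unfold normFun at hjj
  have hcross : ∀ a b : Fin k, ordL τ a ≠ Pc τ (ordL τ b) := by
    intro a b hab
    have h1 : ordL τ a < Pc τ (ordL τ a) := ordL_lt τ a
    have h2 : ordL τ b < Pc τ (ordL τ b) := ordL_lt τ b
    rw [hab] at h1
    rw [Pc_invol] at h1
    exact absurd (h1.trans h2) (by rw [← hab]; exact lt_irrefl _)
  rcases Nat.mod_two_eq_zero_or_one j.1 with h | h <;>
    rcases Nat.mod_two_eq_zero_or_one j'.1 with h' | h'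
  · rw [if_pos h, if_pos h'] at hjj
    have := (ordL_strictMono τ).injective hjj
    rw [← dbl_blk h, ← dbl_blk h', this]
  · rw [if_pos h, if_neg (by omega)] at hjj
    exact absurd hjj (hcross _ _)
  · rw [if_neg (by omega), if_pos h'] at hjj
    exact absurd hjj.symm (hcross _ _)
  · rw [if_neg (by omega), if_neg (by omega)] at hjj
    have := (ordL_strictMono τ).injective (Pc_inj τ hjj)
    rw [← dbl1_blk h, ← dbl1_blk h', this]

noncomputable def normP (τ : Equiv.Perm (Fin (2*k))) : Equiv.Perm (Fin (2*k)) :=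
  Equiv.ofBijective (normFun τ) (Finite.injective_iff_bijective.mp (normFun_inj τ))

lemma normP_dbl (τ : Equiv.Perm (Fin (2*k))) (i : Fin k) :
    normP τ (dbl i) = ordL τ i := by
  show normFun τ (dbl i) = _
  rw [normFun, if_pos (dbl_mod i), blk_dbl]

lemma normP_dbl1 (τ : Equiv.Perm (Fin (2*k))) (i : Fin k) :
    normP τ (dbl1 i) = Pc τ (ordL τ i) := by
  show normFun τ (dbl1 i) = _
  rw [normFun, if_neg (by rw [dbl1_mod]; omega), blk_dbl1]

lemma normP_mem_MS (τ : Equiv.Perm (Fin (2*k))) : normP τ ∈ MS k := by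
  rw [mem_MS]
  constructor
  · intro i
    rw [normP_dbl, normP_dbl1]
    exact ordL_lt τ i
  · intro i i' hii
    rw [normP_dbl, normP_dbl]
    exact ordL_strictMono τ hii

lemma Pc_normP (τ : Equiv.Perm (Fin (2*k))) : Pc (normP τ) = Pc τ := by
  have key : ∀ j, normP τ (bflip j) = Pc τ (normP τ j) := by
    intro j
    rcases dbl_or_dbl1 j with hj | hj <;> rw [hj]
    · rw [bflip_dbl, normP_dbl1, normP_dbl]
    · rw [bflip_dbl1, normP_dbl, normP_dbl1, Pc_invol]
  ext x : 1
  rw [Pc_apply, key, Equiv.Perm.coe_inv, Equiv.apply_symm_apply]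

lemma normP_unique (σ : Equiv.Perm (Fin (2*k))) (hσ : σ ∈ MS k)
    (τ : Equiv.Perm (Fin (2*k))) (hP : Pc σ = Pc τ) : σ = normP τ := by
  have hσ' := mem_MS.mp hσ
  have hbf : ∀ i : Fin k, σ (dbl1 i) = Pc τ (σ (dbl i)) := by
    intro i
    rw [← hP, Pc_apply_apply, bflip_dbl]
  have hmem : ∀ i : Fin k, σ (dbl i) ∈ lowSet τ := by
    intro i
    rw [lowSet, Finset.mem_filter]
    refine ⟨Finset.mem_univ _, ?_⟩
    rw [← hbf]
    exact hσ'.1 i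
  have hsm : StrictMono (fun i => σ (dbl i)) := fun i i' h => hσ'.2 i i' h
  have hord : (fun i => σ (dbl i)) = ⇑((lowSet τ).orderEmbOfFin (card_lowSet τ)) :=
    Finset.orderEmbOfFin_unique (card_lowSet τ) hmem hsm
  have hord' : ∀ i, σ (dbl i) = ordL τ i := fun i => congrFun hord i
  ext j : 1
  rcases dbl_or_dbl1 j with hj | hj <;> rw [hj]
  · rw [normP_dbl, hord']
  · rw [normP_dbl1, hbf, hord']

lemma normP_fix (σ : Equiv.Perm (Fin (2*k))) (hσ : σ ∈ MS k) : normP σ = σ :=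
  (normP_unique σ hσ σ rfl).symm

lemma normP_eq_of_Pc (τ τ' : Equiv.Perm (Fin (2*k))) (hP : Pc τ = Pc τ') :
    normP τ = normP τ' :=
  normP_unique (normP τ) (normP_mem_MS τ) τ' ((Pc_normP τ).trans hP)

end Norm

lemma Fw_mul_right (C : Matrix (Fin (2*k)) (Fin (2*k)) K) (hC : ∀ a b, C b a = - C a b)
    (τ h : Equiv.Perm (Fin (2*k))) (hcomm : ∀ j, h (bflip j) = bflip (h j)) :
    Fw C (τ * h) = Fw C τ := by
  have hwt : wt C (τ * h) = (-1 : K) ^ (epsSet h).card * wt C τ := by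
    unfold wt
    have key : ∀ i : Fin k, C ((τ * h) (dbl i)) ((τ * h) (dbl1 i)) =
        (if i ∈ epsSet h then (-1 : K) else 1) *
          C (τ (dbl (piPerm h hcomm i))) (τ (dbl1 (piPerm h hcomm i))) := by
      intro i
      rw [Equiv.Perm.mul_apply, Equiv.Perm.mul_apply, h_dbl_eq h hcomm, h_dbl1_eq h hcomm]
      by_cases hi : i ∈ epsSet h
      · rw [if_pos hi, if_pos hi, if_pos hi, hC, neg_one_mul]
      · rw [if_neg hi, if_neg hi, if_neg hi, one_mul]
    rw [Finset.prod_congr rfl (fun i _ => key i), Finset.prod_mul_distrib]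
    congr 1
    · rw [Finset.prod_ite, Finset.prod_const, Finset.prod_const, one_pow, mul_one,
        Finset.filter_mem_eq_inter, Finset.univ_inter]
    · exact Equiv.prod_comp (piPerm h hcomm) (fun i => C (τ (dbl i)) (τ (dbl1 i)))
  unfold Fw
  rw [_root_.map_mul, sign_h h hcomm, hwt]
  have hcast : ((((Equiv.Perm.sign τ) * (-1) ^ (epsSet h).card : ℤˣ) : ℤ) : K) =
      ((Equiv.Perm.sign τ : ℤ) : K) * (-1 : K) ^ (epsSet h).card := by
    push_cast
    ring
  rw [hcast]
  have hsq : ((-1 : K) ^ (epsSet h).card) * ((-1 : K) ^ (epsSet h).card) = 1 := by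
    rw [← pow_add]
    exact Even.neg_one_pow ⟨(epsSet h).card, rfl⟩
  calc ((Equiv.Perm.sign τ : ℤ) : K) * (-1 : K) ^ (epsSet h).card *
        ((-1 : K) ^ (epsSet h).card * wt C τ)
      = ((Equiv.Perm.sign τ : ℤ) : K) *
          (((-1 : K) ^ (epsSet h).card * (-1 : K) ^ (epsSet h).card) * wt C τ) := by ring
    _ = ((Equiv.Perm.sign τ : ℤ) : K) * wt C τ := by rw [hsq, one_mul]

lemma Fw_eq_of_Pc (C : Matrix (Fin (2*k)) (Fin (2*k)) K) (hC : ∀ a b, C b a = - C a b)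
    (τ τ' : Equiv.Perm (Fin (2*k))) (hP : Pc τ = Pc τ') : Fw C τ = Fw C τ' := by
  have hcomm : ∀ j, (τ⁻¹ * τ') (bflip j) = bflip ((τ⁻¹ * τ') j) := by
    intro j
    have h1 : Pc τ (τ' j) = Pc τ' (τ' j) := by rw [hP]
    rw [Pc_apply_apply] at h1
    have h2 : τ (bflip (τ⁻¹ (τ' j))) = τ' (bflip j) := by
      rw [← h1, Pc_apply]
    simp only [Equiv.Perm.mul_apply]
    rw [← h2, Equiv.Perm.coe_inv, Equiv.symm_apply_apply]
  have hττ : τ * (τ⁻¹ * τ') = τ' := by group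
  rw [← hττ]
  exact (Fw_mul_right C hC τ (τ⁻¹ * τ') hcomm).symm

lemma normP_cancel (g σ : Equiv.Perm (Fin (2*k))) (hσ : σ ∈ MS k) :
    normP (g⁻¹ * normP (g * σ)) = σ := by
  have h1 : Pc (g⁻¹ * normP (g * σ)) = Pc σ := by
    rw [Pc_mul, Pc_normP, Pc_mul]
    group
  rw [normP_eq_of_Pc _ _ h1, normP_fix σ hσ]

lemma sum_Fw_comp (C : Matrix (Fin (2*k)) (Fin (2*k)) K) (g : Equiv.Perm (Fin (2*k))) :
    ∑ σ ∈ MS k, Fw C (normP (g * σ)) = ∑ σ ∈ MS k, Fw C σ := by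
  refine Finset.sum_nbij' (fun σ => normP (g * σ)) (fun σ => normP (g⁻¹ * σ)) ?_ ?_ ?_ ?_ ?_
  · intro σ _; exact normP_mem_MS _
  · intro σ _; exact normP_mem_MS _
  · intro σ hσ
    have h2 : normP (g⁻¹ * normP (g * normP (g * σ))) = normP (g * σ) :=
      normP_cancel g (normP (g * σ)) (normP_mem_MS _)
    have h3 : normP (g * normP (g * σ)) = normP (g * normP (g * σ)) := rfl
    -- want : normP (g⁻¹ * normP (g * σ)) = σ
    exact normP_cancel g σ hσ
  · intro σ hσ
    have := normP_cancel g⁻¹ σ hσ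
    rwa [inv_inv] at this
  · intro σ _; rfl

lemma hsign_sq (g : Equiv.Perm (Fin (2*k))) :
    ((Equiv.Perm.sign g : ℤ) : K) * ((Equiv.Perm.sign g : ℤ) : K) = 1 := by
  rcases Int.units_eq_one_or (Equiv.Perm.sign g) with h | h <;> rw [h] <;> norm_num

lemma pf_submatrix_perm (C : Matrix (Fin (2*k)) (Fin (2*k)) K)
    (hC : ∀ a b, C b a = - C a b) (g : Equiv.Perm (Fin (2*k))) :
    pfaffian (C.submatrix g g) = ((Equiv.Perm.sign g : ℤ) : K) * pfaffian C := by
  rw [pf_eq, pf_eq, ← sum_Fw_comp C g, Finset.mul_sum]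
  refine Finset.sum_congr rfl fun σ _ => ?_
  rw [Fw_eq_of_Pc C hC _ _ (Pc_normP (g * σ))]
  unfold Fw wt
  have hwt : ∀ i : Fin k, (C.submatrix g g) (σ (dbl i)) (σ (dbl1 i)) =
      C ((g * σ) (dbl i)) ((g * σ) (dbl1 i)) := by
    intro i
    simp [Matrix.submatrix_apply, Equiv.Perm.mul_apply]
  rw [Finset.prod_congr rfl (fun i _ => hwt i), _root_.map_mul]
  have hcast : ((((Equiv.Perm.sign g) * (Equiv.Perm.sign σ) : ℤˣ) : ℤ) : K) =
      ((Equiv.Perm.sign g : ℤ) : K) * ((Equiv.Perm.sign σ : ℤ) : K) := by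
    push_cast; ring
  rw [hcast]
  have := hsign_sq (K := K) g
  set a := ((Equiv.Perm.sign g : ℤ) : K)
  set b := ((Equiv.Perm.sign σ : ℤ) : K)
  set w := ∏ i : Fin k, C ((g * σ) (dbl i)) ((g * σ) (dbl1 i))
  calc b * w = (a * a) * (b * w) := by rw [this, one_mul]
    _ = a * (a * b * w) := by ring

lemma pf_zero_pair (C : Matrix (Fin (2*k)) (Fin (2*k)) K)
    (hC : ∀ a b, C b a = - C a b) (p q : Fin (2*k)) (hpq : p ≠ q)
    (hswap : ∀ x y, C (Equiv.swap p q x) (Equiv.swap p q y) = C x y)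
    (hpq0 : C p q = 0) (hqp0 : C q p = 0) : pfaffian C = 0 := by
  rw [pf_eq]
  refine Finset.sum_involution (fun σ _ => normP (Equiv.swap p q * σ)) ?_ ?_ ?_ ?_
  · intro σ _
    rw [Fw_eq_of_Pc C hC _ _ (Pc_normP (Equiv.swap p q * σ))]
    unfold Fw wt
    have hwt : ∀ i : Fin k,
        C ((Equiv.swap p q * σ) (dbl i)) ((Equiv.swap p q * σ) (dbl1 i)) =
          C (σ (dbl i)) (σ (dbl1 i)) := by
      intro i
      simp only [Equiv.Perm.mul_apply]
      exact hswap _ _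
    rw [Finset.prod_congr rfl (fun i _ => hwt i), _root_.map_mul,
      Equiv.Perm.sign_swap hpq]
    push_cast
    ring
  · intro σ hσ hFw
    intro heq
    apply hFw
    have heq' : normP (Equiv.swap p q * σ) = σ := heq
    have hPc : Equiv.swap p q * Pc σ * (Equiv.swap p q)⁻¹ = Pc σ := by
      rw [← Pc_mul, ← Pc_normP (Equiv.swap p q * σ), heq']
    have hPq : Pc σ p = q := by
      have happ : (Equiv.swap p q * Pc σ * (Equiv.swap p q)⁻¹) p = Pc σ p :=
        congrFun (congrArg (⇑) hPc) p
      rw [Equiv.Perm.mul_apply, Equiv.Perm.mul_apply, Equiv.swap_inv,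
        Equiv.swap_apply_left] at happ
      rcases eq_or_ne (Pc σ q) p with hy | hy
      · rw [← hy, Pc_invol]
      rcases eq_or_ne (Pc σ q) q with hy2 | hy2
      · exact absurd hy2 (Pc_ne σ q)
      · rw [Equiv.swap_apply_of_ne_of_ne hy hy2] at happ
        exact absurd (Pc_inj σ happ.symm) hpq
    have hq' : σ (bflip (σ⁻¹ p)) = q := by
      rw [← Pc_apply, hPq]
    unfold Fw wt
    rcases dbl_or_dbl1 (σ⁻¹ p) with hj | hj
    · have h1 : σ (dbl (blk (σ⁻¹ p))) = p := by
        rw [← hj, Equiv.Perm.coe_inv, Equiv.apply_symm_apply]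
      have h2 : σ (dbl1 (blk (σ⁻¹ p))) = q := by
        rw [← bflip_dbl, ← hj, hq']
      rw [Finset.prod_eq_zero (Finset.mem_univ (blk (σ⁻¹ p))) (by rw [h1, h2, hpq0]),
        mul_zero]
    · have h1 : σ (dbl1 (blk (σ⁻¹ p))) = p := by
        rw [← hj, Equiv.Perm.coe_inv, Equiv.apply_symm_apply]
      have h2 : σ (dbl (blk (σ⁻¹ p))) = q := by
        rw [← bflip_dbl1, ← hj, hq']
      rw [Finset.prod_eq_zero (Finset.mem_univ (blk (σ⁻¹ p))) (by rw [h1, h2, hqp0]),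
        mul_zero]
  · intro σ _
    exact normP_mem_MS _
  · intro σ hσ
    have := normP_cancel (Equiv.swap p q) σ hσ
    rwa [Equiv.swap_inv] at this

section Expand

variable {n : ℕ}

def mEquiv (σ : Equiv.Perm (Fin (2*k))) :
    (Fin k → Fin (2*n) × Fin (2*n)) ≃ (Fin (2*k) → Fin (2*n)) where
  toFun F := fun j => if (σ⁻¹ j).1 % 2 = 0 then (F (blk (σ⁻¹ j))).1 else (F (blk (σ⁻¹ j))).2
  invFun m := fun i => (m (σ (dbl i)), m (σ (dbl1 i)))
  left_inv := by
    intro F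
    funext i
    have h0 : σ⁻¹ (σ (dbl i)) = dbl i := σ.symm_apply_apply _
    have h1 : σ⁻¹ (σ (dbl1 i)) = dbl1 i := σ.symm_apply_apply _
    refine Prod.ext ?_ ?_
    · dsimp only
      rw [h0, if_pos (dbl_mod i), blk_dbl]
    · dsimp only
      rw [h1, if_neg (by rw [dbl1_mod]; omega), blk_dbl1]
  right_inv := by
    intro m
    funext j
    dsimp only
    rcases Nat.mod_two_eq_zero_or_one (σ⁻¹ j).1 with h | h
    · rw [if_pos h, dbl_blk h, Equiv.Perm.coe_inv, Equiv.apply_symm_apply]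
    · rw [if_neg (by omega), dbl1_blk h, Equiv.Perm.coe_inv, Equiv.apply_symm_apply]

lemma mEquiv_fst (σ : Equiv.Perm (Fin (2*k))) (F : Fin k → Fin (2*n) × Fin (2*n)) (i : Fin k) :
    mEquiv σ F (σ (dbl i)) = (F i).1 := by
  show (if (σ⁻¹ (σ (dbl i))).1 % 2 = 0 then _ else _) = _
  rw [Equiv.Perm.coe_inv, Equiv.symm_apply_apply, if_pos (dbl_mod i), blk_dbl]

lemma mEquiv_snd (σ : Equiv.Perm (Fin (2*k))) (F : Fin k → Fin (2*n) × Fin (2*n)) (i : Fin k) :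
    mEquiv σ F (σ (dbl1 i)) = (F i).2 := by
  show (if (σ⁻¹ (σ (dbl1 i))).1 % 2 = 0 then _ else _) = _
  rw [Equiv.Perm.coe_inv, Equiv.symm_apply_apply, if_neg (by rw [dbl1_mod]; omega), blk_dbl1]

lemma pf_BAB (A : Matrix (Fin (2*n)) (Fin (2*n)) K)
    (B : Matrix (Fin (2*k)) (Fin (2*n)) K) :
    pfaffian (B * A * Bᵀ) =
      ∑ m : Fin (2*k) → Fin (2*n), (∏ j, B j (m j)) * pfaffian (A.submatrix m m) := by
  classical
  rw [pf_eq]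
  have hentry : ∀ p q, (B * A * Bᵀ) p q =
      ∑ ab : Fin (2*n) × Fin (2*n), B p ab.1 * A ab.1 ab.2 * B q ab.2 := by
    intro p q
    calc (B * A * Bᵀ) p q = ∑ j, (∑ i, B p i * A i j) * B q j := by
          simp [Matrix.mul_apply, Matrix.transpose_apply]
      _ = ∑ j, ∑ i, B p i * A i j * B q j := by
          simp [Finset.sum_mul]
      _ = ∑ i, ∑ j, B p i * A i j * B q j := Finset.sum_comm
      _ = ∑ ab : Fin (2*n) × Fin (2*n), B p ab.1 * A ab.1 ab.2 * B q ab.2 := by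
          rw [Fintype.sum_prod_type]
  have hinner : ∀ σ ∈ MS k, Fw (B * A * Bᵀ) σ =
      ∑ m : Fin (2*k) → Fin (2*n), ((Equiv.Perm.sign σ : ℤ) : K) *
        ((∏ j, B j (m j)) * ∏ i : Fin k, A (m (σ (dbl i))) (m (σ (dbl1 i)))) := by
    intro σ _
    unfold Fw wt
    rw [Finset.prod_congr rfl (fun i (_ : i ∈ Finset.univ) =>
      hentry (σ (dbl i)) (σ (dbl1 i))), Finset.prod_univ_sum, Finset.mul_sum]
    refine Fintype.sum_equiv (mEquiv σ) _ _ (fun F => ?_)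
    congr 1
    have hB : (∏ j, B j (mEquiv σ F j)) =
        ∏ i : Fin k, (B (σ (dbl i)) (F i).1 * B (σ (dbl1 i)) (F i).2) := by
      rw [← Equiv.prod_comp σ (fun j => B j (mEquiv σ F j)), pairProd]
      refine Finset.prod_congr rfl fun i _ => ?_
      rw [mEquiv_fst, mEquiv_snd]
    have hA : (∏ i : Fin k, A (mEquiv σ F (σ (dbl i))) (mEquiv σ F (σ (dbl1 i)))) =
        ∏ i : Fin k, A (F i).1 (F i).2 := by
      refine Finset.prod_congr rfl fun i _ => ?_
      rw [mEquiv_fst, mEquiv_snd]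
    rw [hB, hA, ← Finset.prod_mul_distrib]
    refine Finset.prod_congr rfl fun i _ => ?_
    ring
  rw [Finset.sum_congr rfl hinner, Finset.sum_comm]
  refine Finset.sum_congr rfl fun m _ => ?_
  rw [pf_eq, Finset.mul_sum]
  refine Finset.sum_congr rfl fun σ _ => ?_
  unfold Fw wt
  simp only [Matrix.submatrix_apply]
  ring

end Expand

section Assemble

lemma pfaffian_cast {m n' : ℕ} (h : m = n') (M : Matrix (Fin n') (Fin n') K) :
    pfaffian (M.submatrix (Fin.cast h) (Fin.cast h)) = pfaffian M := by
  subst h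
  have : (Fin.cast rfl : Fin m → Fin m) = id := rfl
  rw [this, Matrix.submatrix_id_id]

lemma orderIso_cast {ι : Type*} [LinearOrder ι] (U : Finset ι) {m : ℕ} (hU : U.card = m)
    (j : Fin m) :
    ((U.orderIsoOfFin hU j : ι)) = ((U.orderIsoOfFin rfl (Fin.cast hU.symm j) : ι)) := by
  rw [Finset.coe_orderIsoOfFin_apply, Finset.coe_orderIsoOfFin_apply]
  have hsm : StrictMono (fun j : Fin m => U.orderEmbOfFin rfl (Fin.cast hU.symm j)) := by
    intro a b hab
    exact (U.orderEmbOfFin rfl).strictMono (by rw [Fin.lt_def, Fin.coe_cast, Fin.coe_cast]; exact hab)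
  have huniq := Finset.orderEmbOfFin_unique hU
    (f := fun j : Fin m => U.orderEmbOfFin rfl (Fin.cast hU.symm j))
    (fun x => Finset.orderEmbOfFin_mem _ _ _) hsm
  exact (congrFun huniq j).symm

lemma pfSub_eq {n' : ℕ} (A : Matrix (Fin n') (Fin n') K) (U : Finset (Fin n'))
    (hU : U.card = 2*k) :
    pfSub A U = pfaffian (A.submatrix
      (fun j : Fin (2*k) => ((U.orderIsoOfFin hU j : Fin n')))
      (fun j : Fin (2*k) => ((U.orderIsoOfFin hU j : Fin n')))) := by
  have hfun : (fun j : Fin (2*k) => ((U.orderIsoOfFin hU j : Fin n'))) =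
      (fun j : Fin (2*k) => ((U.orderIsoOfFin rfl (Fin.cast hU.symm j) : Fin n'))) := by
    funext j
    exact orderIso_cast U hU j
  rw [hfun]
  have hsub : (A.submatrix
      (fun j : Fin (2*k) => ((U.orderIsoOfFin rfl (Fin.cast hU.symm j) : Fin n')))
      (fun j : Fin (2*k) => ((U.orderIsoOfFin rfl (Fin.cast hU.symm j) : Fin n')))) =
      ((A.submatrix (fun i : Fin U.card => ((U.orderIsoOfFin rfl i : Fin n')))
        (fun i : Fin U.card => ((U.orderIsoOfFin rfl i : Fin n')))).submatrix
        (Fin.cast hU.symm) (Fin.cast hU.symm)) := rfl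
  rw [hsub, pfaffian_cast hU.symm]
  rfl

lemma card_image_eq {n' : ℕ} {m : Fin (2*k) → Fin n'} (h : Function.Injective m) :
    (Finset.image m Finset.univ).card = 2*k := by
  rw [Finset.card_image_of_injective _ h, Finset.card_univ, Fintype.card_fin]

noncomputable def decompPerm {n' : ℕ} (m : Fin (2*k) → Fin n') : Equiv.Perm (Fin (2*k)) :=
  if h : Function.Injective m then
    Equiv.ofBijective
      (fun j => ((Finset.image m Finset.univ).orderIsoOfFin (card_image_eq h)).symm
        ⟨m j, Finset.mem_image_of_mem m (Finset.mem_univ j)⟩)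
      (Finite.injective_iff_bijective.mp (fun a b hab => h
        (congrArg Subtype.val
          ((((Finset.image m Finset.univ).orderIsoOfFin (card_image_eq h)).symm).injective hab))))
  else 1

lemma decompPerm_spec {n' : ℕ} (m : Fin (2*k) → Fin n') (h : Function.Injective m)
    (j : Fin (2*k)) :
    ((Finset.image m Finset.univ).orderIsoOfFin (card_image_eq h) (decompPerm m j) : Fin n') =
      m j := by
  rw [decompPerm, dif_pos h]
  simp [Equiv.ofBijective_apply, OrderIso.apply_symm_apply]

lemma orderIso_congr {ι : Type*} [LinearOrder ι] {U V : Finset ι} (hUV : U = V)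
    (hU : U.card = 2*k) (hV : V.card = 2*k) (x : Fin (2*k)) :
    (U.orderIsoOfFin hU x : ι) = (V.orderIsoOfFin hV x : ι) := by
  subst hUV
  rfl

lemma mono_inj {ι : Type*} [LinearOrder ι] (U : Finset ι) (hU : U.card = 2*k) :
    Function.Injective (fun j : Fin (2*k) => (U.orderIsoOfFin hU j : ι)) :=
  fun a b hab => (U.orderIsoOfFin hU).injective (Subtype.coe_injective hab)

lemma image_mono {ι : Type*} [LinearOrder ι] [DecidableEq ι] (U : Finset ι) (hU : U.card = 2*k)
    (g : Equiv.Perm (Fin (2*k))) :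
    Finset.image (fun j : Fin (2*k) => (U.orderIsoOfFin hU (g j) : ι)) Finset.univ = U := by
  ext x
  simp only [Finset.mem_image, Finset.mem_univ, true_and]
  constructor
  · rintro ⟨j, rfl⟩
    exact (U.orderIsoOfFin hU (g j)).2
  · intro hx
    refine ⟨g⁻¹ ((U.orderIsoOfFin hU).symm ⟨x, hx⟩), ?_⟩
    rw [Equiv.Perm.coe_inv, Equiv.apply_symm_apply, OrderIso.apply_symm_apply]

end Assemble

end Field

end IW

/-- Ishikawa–Wakayama formula: for a skew-symmetric `2n × 2n` matrix `A` and a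
`2k × 2n` matrix `B` with `k ≤ n`,
`Pf (B A Bᵀ) = Σ_{U ⊆ [2n], |U| = 2k} det B[·, U] · Pf A[U]`. -/
theorem ishikawa_wakayama {n k : ℕ} (hk : k ≤ n) {K : Type*} [Field K]
    (A : Matrix (Fin (2 * n)) (Fin (2 * n)) K)
    (hA : Aᵀ = -A) (hAd : ∀ i, A i i = 0)
    (B : Matrix (Fin (2 * k)) (Fin (2 * n)) K) :
    pfaffian (B * A * Bᵀ) =
      ∑ U ∈ (Finset.univ.filter
          (fun U : Finset (Fin (2 * n)) => U.card = 2 * k)).attach,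
        (B.submatrix id (fun j : Fin (2 * k) =>
          ((U.1.orderIsoOfFin ((Finset.mem_filter.mp U.2).2)) j : Fin (2 * n)))).det *
          pfSub A U.1 := by
  classical
  have hskew : ∀ a b : Fin (2*n), A b a = - A a b := by
    intro a b
    have h1 := congrFun (congrFun hA a) b
    simpa using h1
  rw [IW.pf_BAB A B,
    ← Finset.sum_filter_add_sum_filter_not Finset.univ
      (fun m : Fin (2*k) → Fin (2*n) => Function.Injective m)]
  have hzero : (∑ m ∈ Finset.univ.filter
      (fun m : Fin (2*k) → Fin (2*n) => ¬ Function.Injective m),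
      (∏ j, B j (m j)) * pfaffian (A.submatrix m m)) = 0 := by
    refine Finset.sum_eq_zero fun m hm => ?_
    rw [Finset.mem_filter] at hm
    obtain ⟨p, q, hmpq, hpq⟩ := Function.not_injective_iff.mp hm.2
    have hmswap : ∀ x, m (Equiv.swap p q x) = m x := by
      intro x
      rcases eq_or_ne x p with rfl | hx
      · rw [Equiv.swap_apply_left, hmpq]
      rcases eq_or_ne x q with rfl | hx2
      · rw [Equiv.swap_apply_right, hmpq]
      · rw [Equiv.swap_apply_of_ne_of_ne hx hx2]
    rw [IW.pf_zero_pair (A.submatrix m m) (fun a b => hskew _ _) p q hpq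
      (fun x y => by simp only [Matrix.submatrix_apply, hmswap])
      (by simp only [Matrix.submatrix_apply]; rw [hmpq]; exact hAd _)
      (by simp only [Matrix.submatrix_apply]; rw [hmpq]; exact hAd _), mul_zero]
  rw [hzero, add_zero]
  have hRHS : ∀ U ∈ (Finset.univ.filter
      (fun U : Finset (Fin (2 * n)) => U.card = 2 * k)).attach,
      (B.submatrix id (fun j : Fin (2 * k) =>
        ((U.1.orderIsoOfFin ((Finset.mem_filter.mp U.2).2)) j : Fin (2 * n)))).det *
        pfSub A U.1 =
      ∑ g : Equiv.Perm (Fin (2*k)),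
        (∏ j, B j ((U.1.orderIsoOfFin ((Finset.mem_filter.mp U.2).2) (g j) : Fin (2*n)))) *
          pfaffian (A.submatrix
            (fun j => (U.1.orderIsoOfFin ((Finset.mem_filter.mp U.2).2) (g j) : Fin (2*n)))
            (fun j => (U.1.orderIsoOfFin ((Finset.mem_filter.mp U.2).2) (g j) : Fin (2*n)))) := by
    intro U _
    have hUc := (Finset.mem_filter.mp U.2).2
    have hsubskew : ∀ a b : Fin (2*k),
        (A.submatrix
          (fun j : Fin (2*k) => (U.1.orderIsoOfFin hUc j : Fin (2*n)))
          (fun j : Fin (2*k) => (U.1.orderIsoOfFin hUc j : Fin (2*n)))) b a =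
        - (A.submatrix
          (fun j : Fin (2*k) => (U.1.orderIsoOfFin hUc j : Fin (2*n)))
          (fun j : Fin (2*k) => (U.1.orderIsoOfFin hUc j : Fin (2*n)))) a b := by
      intro a b
      simp only [Matrix.submatrix_apply]
      exact hskew _ _
    have hpf : ∀ g : Equiv.Perm (Fin (2*k)),
        pfaffian (A.submatrix
          (fun j => (U.1.orderIsoOfFin hUc (g j) : Fin (2*n)))
          (fun j => (U.1.orderIsoOfFin hUc (g j) : Fin (2*n)))) =
        ((Equiv.Perm.sign g : ℤ) : K) * pfSub A U.1 := by
      intro g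
      have hsub : A.submatrix
          (fun j => (U.1.orderIsoOfFin hUc (g j) : Fin (2*n)))
          (fun j => (U.1.orderIsoOfFin hUc (g j) : Fin (2*n))) =
          (A.submatrix
            (fun j : Fin (2*k) => (U.1.orderIsoOfFin hUc j : Fin (2*n)))
            (fun j : Fin (2*k) => (U.1.orderIsoOfFin hUc j : Fin (2*n)))).submatrix g g := rfl
      rw [hsub, IW.pf_submatrix_perm _ hsubskew g, IW.pfSub_eq A U.1 hUc]
    have hdet : (B.submatrix id (fun j : Fin (2 * k) =>
        ((U.1.orderIsoOfFin ((Finset.mem_filter.mp U.2).2)) j : Fin (2 * n)))).det =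
        ∑ g : Equiv.Perm (Fin (2*k)),
          ((Equiv.Perm.sign g : ℤ) : K) *
            ∏ j, B j ((U.1.orderIsoOfFin hUc (g j) : Fin (2*n))) := by
      rw [← Matrix.det_transpose, Matrix.det_apply']
      exact Finset.sum_congr rfl fun g _ => rfl
    rw [hdet, Finset.sum_mul]
    refine Finset.sum_congr rfl fun g _ => ?_
    rw [hpf g]
    ring
  rw [Finset.sum_congr rfl hRHS, ← Finset.sum_product']
  refine Finset.sum_bij'
    (i := fun (m : Fin (2*k) → Fin (2*n)) (hm : m ∈ Finset.univ.filter
      (fun m : Fin (2*k) → Fin (2*n) => Function.Injective m)) =>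
      ((⟨Finset.image m Finset.univ, by
          rw [Finset.mem_filter]
          exact ⟨Finset.mem_univ _, IW.card_image_eq (Finset.mem_filter.mp hm).2⟩⟩ :
        {x // x ∈ Finset.univ.filter (fun U : Finset (Fin (2 * n)) => U.card = 2 * k)}),
        IW.decompPerm m))
    (j := fun x _ => fun j : Fin (2*k) =>
      (x.1.1.orderIsoOfFin ((Finset.mem_filter.mp x.1.2).2) (x.2 j) : Fin (2*n)))
    ?_ ?_ ?_ ?_ ?_
  · intro m hm
    rw [Finset.mem_product]
    exact ⟨Finset.mem_attach _ _, Finset.mem_univ _⟩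
  · intro x hx
    rw [Finset.mem_filter]
    refine ⟨Finset.mem_univ _, ?_⟩
    intro a b hab
    exact x.2.injective (IW.mono_inj x.1.1 ((Finset.mem_filter.mp x.1.2).2) hab)
  · intro m hm
    have hinj : Function.Injective m := (Finset.mem_filter.mp hm).2
    funext j
    exact IW.decompPerm_spec m hinj j
  · intro x hx
    have hinj : Function.Injective (fun j : Fin (2*k) =>
        (x.1.1.orderIsoOfFin ((Finset.mem_filter.mp x.1.2).2) (x.2 j) : Fin (2*n))) := by
      intro a b hab
      exact x.2.injective (IW.mono_inj x.1.1 ((Finset.mem_filter.mp x.1.2).2) hab)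
    have him : Finset.image (fun j : Fin (2*k) =>
        (x.1.1.orderIsoOfFin ((Finset.mem_filter.mp x.1.2).2) (x.2 j) : Fin (2*n)))
        Finset.univ = x.1.1 :=
      IW.image_mono x.1.1 ((Finset.mem_filter.mp x.1.2).2) x.2
    refine Prod.ext (Subtype.ext him) ?_
    ext j : 1
    apply IW.mono_inj x.1.1 ((Finset.mem_filter.mp x.1.2).2)
    show (x.1.1.orderIsoOfFin _ (IW.decompPerm _ j) : Fin (2*n)) =
      (x.1.1.orderIsoOfFin _ (x.2 j) : Fin (2*n))
    rw [← IW.orderIso_congr him (IW.card_image_eq hinj) ((Finset.mem_filter.mp x.1.2).2)]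
    exact IW.decompPerm_spec _ hinj j
  · intro m hm
    have hinj : Function.Injective m := (Finset.mem_filter.mp hm).2
    have hprod : (∏ j, B j (m j)) = ∏ j, B j
        (((Finset.image m Finset.univ).orderIsoOfFin (IW.card_image_eq hinj)
          (IW.decompPerm m j) : Fin (2*n))) :=
      Finset.prod_congr rfl fun j _ => by rw [IW.decompPerm_spec m hinj j]
    have hfun : (fun j : Fin (2*k) =>
        (((Finset.image m Finset.univ).orderIsoOfFin (IW.card_image_eq hinj))
          (IW.decompPerm m j) : Fin (2*n))) = m :=
      funext (IW.decompPerm_spec m hinj)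
    show (∏ j, B j (m j)) * pfaffian (A.submatrix m m) =
      (∏ j, B j (((Finset.image m Finset.univ).orderIsoOfFin (IW.card_image_eq hinj))
          (IW.decompPerm m j) : Fin (2*n))) * pfaffian (A.submatrix
        (fun j : Fin (2*k) => (((Finset.image m Finset.univ).orderIsoOfFin
          (IW.card_image_eq hinj)) (IW.decompPerm m j) : Fin (2*n)))
        (fun j : Fin (2*k) => (((Finset.image m Finset.univ).orderIsoOfFin
          (IW.card_image_eq hinj)) (IW.decompPerm m j) : Fin (2*n))))
    rw [hfun, ← hprod]
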